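/- Let U ⊆ ℂ ≅ ℝ² be a connected open neighborhood of 0 and let φ₁, φ₂ : U → ℝ be real analytic functions, both satisfying Δ( e^{−2φ} Δ( e^{−2φ} Δφ ) ) − Δ( e^{−4φ} (Δφ)² ) = 0 on U. If there is an open interval I ∋ 0 with I × {0} ⊆ U such that ∂_y^j φ₁ (x, 0) = ∂_y^j φ₂ (x, 0) for all x ∈ I and all j = 0, 1, …, 5, then φ₁ = φ₂ on some open neighborhood of 0. -/

import Mathlib

open Complex
open scoped ContDiff

/-- Partial derivative in the `x`-direction (real coordinate). -/
noncomputable def pdx (f : ℂ → ℂ) (z : ℂ) : ℂ := fderiv ℝ f z 1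

/-- Partial derivative in the `y`-direction (real coordinate). -/
noncomputable def pdy (f : ℂ → ℂ) (z : ℂ) : ℂ := fderiv ℝ f z Complex.I

/-- Wirtinger derivative `∂_z = (1/2)(∂_x - i ∂_y)`. -/
noncomputable def pdz (f : ℂ → ℂ) (z : ℂ) : ℂ := (1/2) * (pdx f z - Complex.I * pdy f z)

/-- Wirtinger derivative `∂_z̄ = (1/2)(∂_x + i ∂_y)`. -/
noncomputable def pdzbar (f : ℂ → ℂ) (z : ℂ) : ℂ := (1/2) * (pdx f z + Complex.I * pdy f z)

/-- The complexification of a real-valued function. -/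
noncomputable def phiC (φ : ℂ → ℝ) : ℂ → ℂ := fun z => (φ z : ℂ)

/-- The Gauss curvature `K = -2 e^{-2φ} ∂_z ∂_z̄ φ` of the metric `g = 2 e^{2φ} |dz|²`. -/
noncomputable def gaussK (φ : ℂ → ℝ) : ℂ → ℂ := fun z =>
  (-2 : ℂ) * (Real.exp (-2 * φ z) : ℂ) * pdz (pdzbar (phiC φ)) z

/-- The Laplace–Beltrami operator `Δ_g f = 2 e^{-2φ} ∂_z ∂_z̄ f` of `g = 2 e^{2φ} |dz|²`. -/
noncomputable def lapg (φ : ℂ → ℝ) (f : ℂ → ℂ) : ℂ → ℂ := fun z =>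
  (2 : ℂ) * (Real.exp (-2 * φ z) : ℂ) * pdz (pdzbar f) z

/-- Second covariant derivative `K_{;z̄z̄} = ∂_z̄² K - 2 (∂_z̄ φ)(∂_z̄ K)`. -/
noncomputable def Kzb2 (φ : ℂ → ℝ) : ℂ → ℂ := fun z =>
  pdzbar (pdzbar (gaussK φ)) z - 2 * pdzbar (phiC φ) z * pdzbar (gaussK φ) z

/-- Third covariant derivative `K_{;z̄z̄z} = ∂_z K_{;z̄z̄}`. -/
noncomputable def Kzb2z (φ : ℂ → ℝ) : ℂ → ℂ := fun z => pdz (Kzb2 φ) z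

/-- Fourth covariant derivative `K_{;z̄z̄zz} = ∂_z K_{;z̄z̄z} - 2 (∂_z φ) K_{;z̄z̄z}`. -/
noncomputable def Kzb2z2 (φ : ℂ → ℝ) : ℂ → ℂ := fun z =>
  pdz (Kzb2z φ) z - 2 * pdz (phiC φ) z * Kzb2z φ z

/-- The Euclidean Laplacian `Δ = ∂_x² + ∂_y²` on real-valued functions on `ℂ ≅ ℝ²`. -/
noncomputable def lapR (f : ℂ → ℝ) : ℂ → ℝ := fun z =>
  fderiv ℝ (fun w => fderiv ℝ f w 1) z 1 + fderiv ℝ (fun w => fderiv ℝ f w Complex.I) z Complex.I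

/-- The sixth-order obstruction-flatness PDE operator
`Δ(e^{-2φ} Δ(e^{-2φ} Δφ)) - Δ(e^{-4φ} (Δφ)²)` (equation (4.8) of the paper). -/
noncomputable def obsPDE (φ : ℂ → ℝ) : ℂ → ℝ := fun z =>
  lapR (fun w => Real.exp (-2 * φ w) * lapR (fun u => Real.exp (-2 * φ u) * lapR φ u) w) z
    - lapR (fun w => Real.exp (-4 * φ w) * (lapR φ w) ^ 2) z

/-- Partial derivative in the `y`-direction for real-valued functions on `ℂ ≅ ℝ²`. -/
noncomputable def pdyR (f : ℂ → ℝ) : ℂ → ℝ := fun z => fderiv ℝ f z Complex.I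

/-- Partial derivative in the `x`-direction for real-valued functions on `ℂ ≅ ℝ²`. -/
noncomputable def pdxR (f : ℂ → ℝ) : ℂ → ℝ := fun z => fderiv ℝ f z 1

namespace CK

variable {U : Set ℂ} {f g φ : ℂ → ℝ} {z : ℂ}

lemma eqOn_dir (hU : IsOpen U) (h : Set.EqOn f g U) (v : ℂ) :
    Set.EqOn (fun z => fderiv ℝ f z v) (fun z => fderiv ℝ g z v) U := fun z hz => by
  have hev : f =ᶠ[nhds z] g := Filter.eventuallyEq_of_mem (hU.mem_nhds hz) h
  simp only [hev.fderiv_eq]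

lemma pdxR_congr (hU : IsOpen U) (h : Set.EqOn f g U) : Set.EqOn (pdxR f) (pdxR g) U :=
  eqOn_dir hU h 1

lemma pdyR_congr (hU : IsOpen U) (h : Set.EqOn f g U) : Set.EqOn (pdyR f) (pdyR g) U :=
  eqOn_dir hU h Complex.I

lemma pdxR_iter_congr (hU : IsOpen U) (h : Set.EqOn f g U) (a : ℕ) :
    Set.EqOn (pdxR^[a] f) (pdxR^[a] g) U := by
  induction a with
  | zero => simpa using h
  | succ a ih =>
      rw [Function.iterate_succ_apply', Function.iterate_succ_apply']
      exact pdxR_congr hU ih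

lemma pdyR_iter_congr (hU : IsOpen U) (h : Set.EqOn f g U) (a : ℕ) :
    Set.EqOn (pdyR^[a] f) (pdyR^[a] g) U := by
  induction a with
  | zero => simpa using h
  | succ a ih =>
      rw [Function.iterate_succ_apply', Function.iterate_succ_apply']
      exact pdyR_congr hU ih

lemma analytic_pdxR (hf : AnalyticOnNhd ℝ f U) : AnalyticOnNhd ℝ (pdxR f) U := fun z hz =>
  ((ContinuousLinearMap.apply ℝ ℝ (1 : ℂ)).analyticAt _).comp ((hf.fderiv) z hz)

lemma analytic_pdyR (hf : AnalyticOnNhd ℝ f U) : AnalyticOnNhd ℝ (pdyR f) U := fun z hz =>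
  ((ContinuousLinearMap.apply ℝ ℝ (Complex.I : ℂ)).analyticAt _).comp ((hf.fderiv) z hz)

lemma analytic_pdxR_iter (hf : AnalyticOnNhd ℝ f U) (a : ℕ) :
    AnalyticOnNhd ℝ (pdxR^[a] f) U := by
  induction a with
  | zero => simpa using hf
  | succ a ih => rw [Function.iterate_succ_apply']; exact analytic_pdxR ih

lemma analytic_pdyR_iter (hf : AnalyticOnNhd ℝ f U) (a : ℕ) :
    AnalyticOnNhd ℝ (pdyR^[a] f) U := by
  induction a with
  | zero => simpa using hf
  | succ a ih => rw [Function.iterate_succ_apply']; exact analytic_pdyR ih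

lemma fderiv_dir_eq (hd : DifferentiableAt ℝ (fderiv ℝ f) z) (v w : ℂ) :
    fderiv ℝ (fun u => fderiv ℝ f u v) z w = fderiv ℝ (fderiv ℝ f) z w v := by
  rw [fderiv_clm_apply hd (differentiableAt_const v)]
  simp

lemma schwarz (hf : AnalyticOnNhd ℝ f U) {z : ℂ} (hz : z ∈ U) (v w : ℂ) :
    fderiv ℝ (fun u => fderiv ℝ f u v) z w = fderiv ℝ (fun u => fderiv ℝ f u w) z v := by
  have hd : DifferentiableAt ℝ (fderiv ℝ f) z := ((hf.fderiv) z hz).differentiableAt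
  have hsymm : IsSymmSndFDerivAt ℝ f z :=
    (hf z hz).contDiffAt.isSymmSndFDerivAt (n := (2 : WithTop ℕ∞)) (by simp [minSmoothness_of_isRCLikeNormedField])
  rw [fderiv_dir_eq hd v w, fderiv_dir_eq hd w v, hsymm w v]

lemma pdxR_pdyR_swap (hf : AnalyticOnNhd ℝ f U) {z : ℂ} (hz : z ∈ U) :
    pdxR (pdyR f) z = pdyR (pdxR f) z :=
  schwarz hf hz Complex.I 1

lemma pdyR_pdxR_iter_swap (hU : IsOpen U) (hf : AnalyticOnNhd ℝ f U) (a : ℕ) :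
    Set.EqOn (pdyR (pdxR^[a] f)) (pdxR^[a] (pdyR f)) U := by
  induction a generalizing f with
  | zero => intro z hz; rfl
  | succ a ih =>
      intro z hz
      rw [Function.iterate_succ_apply]
      have h1 := ih (analytic_pdxR hf) hz
      rw [h1]
      have h2 : Set.EqOn (pdyR (pdxR f)) (pdxR (pdyR f)) U := fun w hw =>
        (pdxR_pdyR_swap hf hw).symm
      rw [pdxR_iter_congr hU h2 a hz, ← Function.iterate_succ_apply]

/-- Mixed partial derivative `∂_x^a ∂_y^b`. -/
noncomputable def D (a b : ℕ) (φ : ℂ → ℝ) : ℂ → ℝ := pdxR^[a] (pdyR^[b] φ)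

lemma analytic_D (hf : AnalyticOnNhd ℝ f U) (a b : ℕ) : AnalyticOnNhd ℝ (D a b f) U := by
  induction a with
  | zero => exact analytic_pdyR_iter hf b
  | succ a ih => rw [D, Function.iterate_succ_apply']; exact analytic_pdxR ih

lemma pdxR_D (a b : ℕ) (φ : ℂ → ℝ) : pdxR (D a b φ) = D (a + 1) b φ :=
  (Function.iterate_succ_apply' pdxR a _).symm

lemma pdyR_D (hU : IsOpen U) (hf : AnalyticOnNhd ℝ f U) (a b : ℕ) :
    Set.EqOn (pdyR (D a b f)) (D a (b + 1) f) U := by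
  intro z hz
  have h1 := pdyR_pdxR_iter_swap hU (analytic_pdyR_iter hf b) a hz
  rw [D, h1, D, ← Function.iterate_succ_apply' pdyR b]

lemma tangent_deriv {I : Set ℝ} (hIopen : IsOpen I) {g₁ g₂ : ℂ → ℝ} {x : ℝ}
    (hg₁ : DifferentiableAt ℝ g₁ ↑x) (hg₂ : DifferentiableAt ℝ g₂ ↑x)
    (h : ∀ t ∈ I, g₁ ↑t = g₂ ↑t) (hx : x ∈ I) : pdxR g₁ ↑x = pdxR g₂ ↑x := by
  have key : ∀ (g : ℂ → ℝ), DifferentiableAt ℝ g ↑x →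
      HasDerivAt (fun t : ℝ => g ↑t) (fderiv ℝ g ↑x 1) x := by
    intro g hg
    have h0 := (hg.hasFDerivAt.comp x Complex.ofRealCLM.hasFDerivAt).hasDerivAt
    simp at h0; exact h0
  have hev : (fun t : ℝ => g₁ ↑t) =ᶠ[nhds x] fun t : ℝ => g₂ ↑t :=
    Filter.eventuallyEq_of_mem (hIopen.mem_nhds hx) (fun t ht => h t ht)
  have c2 : HasDerivAt (fun t : ℝ => g₂ ↑t) (fderiv ℝ g₁ ↑x 1) x :=
    (key g₁ hg₁).congr_of_eventuallyEq hev.symm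
  exact c2.unique (key g₂ hg₂)

/-- Formal expressions in the jets of a function. -/
inductive Expr where
  | jet (a b : ℕ) : Expr
  | const (c : ℝ) : Expr
  | add (e₁ e₂ : Expr) : Expr
  | mul (e₁ e₂ : Expr) : Expr
  | exp (e : Expr) : Expr

namespace Expr

noncomputable def eval : Expr → (ℕ → ℕ → ℝ) → ℝ
  | .jet a b, J => J a b
  | .const c, _ => c
  | .add e₁ e₂, J => eval e₁ J + eval e₂ J
  | .mul e₁ e₂, J => eval e₁ J * eval e₂ J
  | .exp e, J => Real.exp (eval e J)

noncomputable def dX : Expr → Expr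
  | .jet a b => .jet (a + 1) b
  | .const _ => .const 0
  | .add e₁ e₂ => .add (dX e₁) (dX e₂)
  | .mul e₁ e₂ => .add (.mul (dX e₁) e₂) (.mul e₁ (dX e₂))
  | .exp e => .mul (.exp e) (dX e)

noncomputable def dY : Expr → Expr
  | .jet a b => .jet a (b + 1)
  | .const _ => .const 0
  | .add e₁ e₂ => .add (dY e₁) (dY e₂)
  | .mul e₁ e₂ => .add (.mul (dY e₁) e₂) (.mul e₁ (dY e₂))
  | .exp e => .mul (.exp e) (dY e)

noncomputable def t6 : Expr → Expr
  | .jet a b => if b ≤ 5 then .jet a b else .const 0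
  | .const c => .const c
  | .add e₁ e₂ => .add (t6 e₁) (t6 e₂)
  | .mul e₁ e₂ => .mul (t6 e₁) (t6 e₂)
  | .exp e => .exp (t6 e)

noncomputable def yOrd : Expr → ℕ
  | .jet _ b => b
  | .const _ => 0
  | .add e₁ e₂ => max (yOrd e₁) (yOrd e₂)
  | .mul e₁ e₂ => max (yOrd e₁) (yOrd e₂)
  | .exp e => yOrd e

lemma yOrd_dX (e : Expr) : yOrd (dX e) = yOrd e := by
  induction e <;> simp [dX, yOrd, *]

lemma yOrd_dY (e : Expr) : yOrd (dY e) ≤ yOrd e + 1 := by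
  induction e <;> simp [dY, yOrd, *] <;> omega

lemma yOrd_t6 (e : Expr) : yOrd (t6 e) ≤ 5 := by
  induction e with
  | jet a b => by_cases h : b ≤ 5 <;> simp [t6, yOrd, h]
  | const c => simp [t6, yOrd]
  | add e₁ e₂ ih₁ ih₂ => simp [t6, yOrd]; omega
  | mul e₁ e₂ ih₁ ih₂ => simp [t6, yOrd]; omega
  | exp e ih => simpa [t6, yOrd] using ih

lemma yOrd_dX_iter (e : Expr) (a : ℕ) : yOrd (dX^[a] e) = yOrd e := by
  induction a with
  | zero => rfl
  | succ a ih => rw [Function.iterate_succ_apply', yOrd_dX, ih]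

lemma yOrd_dY_iter (e : Expr) (a : ℕ) : yOrd (dY^[a] e) ≤ yOrd e + a := by
  induction a with
  | zero => simp
  | succ a ih =>
      rw [Function.iterate_succ_apply']
      have := yOrd_dY (dY^[a] e)
      omega

lemma eval_congr_le {J₁ J₂ : ℕ → ℕ → ℝ} {N : ℕ} (e : Expr) (he : yOrd e ≤ N)
    (h : ∀ a b, b ≤ N → J₁ a b = J₂ a b) : eval e J₁ = eval e J₂ := by
  induction e with
  | jet a b => exact h a b (by simpa [yOrd] using he)
  | const c => rfl
  | add e₁ e₂ ih₁ ih₂ =>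
      simp only [yOrd, max_le_iff] at he
      simp [eval, ih₁ he.1, ih₂ he.2]
  | mul e₁ e₂ ih₁ ih₂ =>
      simp only [yOrd, max_le_iff] at he
      simp [eval, ih₁ he.1, ih₂ he.2]
  | exp e ih => simp only [eval, ih (by simpa [yOrd] using he)]

lemma eval_congr {J₁ J₂ : ℕ → ℕ → ℝ} (e : Expr) (h : ∀ a b, J₁ a b = J₂ a b) :
    eval e J₁ = eval e J₂ :=
  eval_congr_le e le_rfl (fun a b _ => h a b)

end Expr

/-- Evaluation of a formal expression on the jets of `φ`. -/
noncomputable def ev (φ : ℂ → ℝ) (e : Expr) : ℂ → ℝ := fun z =>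
  e.eval (fun a b => D a b φ z)

lemma dir_add (hf : DifferentiableAt ℝ f z) (hg : DifferentiableAt ℝ g z) (v : ℂ) :
    fderiv ℝ (fun w => f w + g w) z v = fderiv ℝ f z v + fderiv ℝ g z v := by
  rw [fderiv_fun_add hf hg]; rfl

lemma dir_mul (hf : DifferentiableAt ℝ f z) (hg : DifferentiableAt ℝ g z) (v : ℂ) :
    fderiv ℝ (fun w => f w * g w) z v = f z * fderiv ℝ g z v + g z * fderiv ℝ f z v := by
  rw [fderiv_fun_mul hf hg]; simp [mul_comm]

lemma dir_exp (hf : DifferentiableAt ℝ f z) (v : ℂ) :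
    fderiv ℝ (fun w => Real.exp (f w)) z v = Real.exp (f z) * fderiv ℝ f z v := by
  rw [_root_.fderiv_exp hf]; simp

theorem bridge (hU : IsOpen U) (hφ : AnalyticOnNhd ℝ φ U) (e : Expr) :
    AnalyticOnNhd ℝ (ev φ e) U ∧ Set.EqOn (pdxR (ev φ e)) (ev φ (Expr.dX e)) U ∧
      Set.EqOn (pdyR (ev φ e)) (ev φ (Expr.dY e)) U := by
  induction e with
  | jet a b =>
      refine ⟨analytic_D hφ a b, ?_, ?_⟩
      · intro z hz
        show pdxR (D a b φ) z = D (a + 1) b φ z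
        rw [pdxR_D]
      · intro z hz
        exact pdyR_D hU hφ a b hz
  | const c =>
      refine ⟨analyticOnNhd_const, ?_, ?_⟩ <;> intro z hz
      · show fderiv ℝ (fun _ : ℂ => c) z 1 = ((0:ℝ))
        simp
      · show fderiv ℝ (fun _ : ℂ => c) z Complex.I = ((0:ℝ))
        simp
  | add e₁ e₂ ih₁ ih₂ =>
      obtain ⟨a₁, x₁, y₁⟩ := ih₁; obtain ⟨a₂, x₂, y₂⟩ := ih₂
      refine ⟨fun z hz => (a₁ z hz).add (a₂ z hz), ?_, ?_⟩ <;> intro z hz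
      · show fderiv ℝ (fun w => ev φ e₁ w + ev φ e₂ w) z 1 = _
        rw [dir_add (a₁ z hz).differentiableAt (a₂ z hz).differentiableAt]
        exact congrArg₂ (· + ·) (x₁ hz) (x₂ hz)
      · show fderiv ℝ (fun w => ev φ e₁ w + ev φ e₂ w) z Complex.I = _
        rw [dir_add (a₁ z hz).differentiableAt (a₂ z hz).differentiableAt]
        exact congrArg₂ (· + ·) (y₁ hz) (y₂ hz)
  | mul e₁ e₂ ih₁ ih₂ =>
      obtain ⟨a₁, x₁, y₁⟩ := ih₁; obtain ⟨a₂, x₂, y₂⟩ := ih₂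
      refine ⟨fun z hz => (a₁ z hz).mul (a₂ z hz), ?_, ?_⟩ <;> intro z hz
      · show fderiv ℝ (fun w => ev φ e₁ w * ev φ e₂ w) z 1 = _
        rw [dir_mul (a₁ z hz).differentiableAt (a₂ z hz).differentiableAt]
        show _ = ev φ (Expr.dX e₁) z * ev φ e₂ z + ev φ e₁ z * ev φ (Expr.dX e₂) z
        rw [← x₁ hz, ← x₂ hz]
        show _ = pdxR (ev φ e₁) z * ev φ e₂ z + ev φ e₁ z * pdxR (ev φ e₂) z
        unfold pdxR; ring
      · show fderiv ℝ (fun w => ev φ e₁ w * ev φ e₂ w) z Complex.I = _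
        rw [dir_mul (a₁ z hz).differentiableAt (a₂ z hz).differentiableAt]
        show _ = ev φ (Expr.dY e₁) z * ev φ e₂ z + ev φ e₁ z * ev φ (Expr.dY e₂) z
        rw [← y₁ hz, ← y₂ hz]
        show _ = pdyR (ev φ e₁) z * ev φ e₂ z + ev φ e₁ z * pdyR (ev φ e₂) z
        unfold pdyR; ring
  | exp e ih =>
      obtain ⟨a₁, x₁, y₁⟩ := ih
      refine ⟨fun z hz => (a₁ z hz).rexp, ?_, ?_⟩ <;> intro z hz
      · show fderiv ℝ (fun w => Real.exp (ev φ e w)) z 1 = _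
        rw [dir_exp (a₁ z hz).differentiableAt]
        show _ = Real.exp (ev φ e z) * ev φ (Expr.dX e) z
        rw [← x₁ hz]; rfl
      · show fderiv ℝ (fun w => Real.exp (ev φ e w)) z Complex.I = _
        rw [dir_exp (a₁ z hz).differentiableAt]
        show _ = Real.exp (ev φ e z) * ev φ (Expr.dY e) z
        rw [← y₁ hz]; rfl

noncomputable def lapE (e : Expr) : Expr := .add (Expr.dX (Expr.dX e)) (Expr.dY (Expr.dY e))
noncomputable def EE : Expr := .exp (.mul (.const (-2)) (.jet 0 0))
noncomputable def P1 : Expr := lapE (.jet 0 0)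
noncomputable def P2 : Expr := .mul EE P1
noncomputable def P3 : Expr := lapE P2
noncomputable def P4 : Expr := .mul EE P3
noncomputable def EA : Expr := lapE P4
noncomputable def EB : Expr := lapE (.mul (.mul EE EE) (.mul P1 P1))
noncomputable def E0 : Expr := .add EA (.mul (.const (-1)) EB)
noncomputable def E6 : Expr :=
  .mul (.mul (.exp (.mul (.const 2) (.jet 0 0))) (.exp (.mul (.const 2) (.jet 0 0))))
    (.mul (.const (-1)) (Expr.t6 E0))

set_option maxHeartbeats 2000000 in
theorem decomp (J : ℕ → ℕ → ℝ) :
    Expr.eval E0 J =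
      Real.exp (-2 * J 0 0) * Real.exp (-2 * J 0 0) * J 0 6 + Expr.eval (Expr.t6 E0) J := by
  simp only [E0, EA, EB, P4, P3, P2, P1, EE, lapE, Expr.dX, Expr.dY, Expr.t6, Expr.eval]
  norm_num [Expr.eval]
  all_goals ring

lemma yOrd_E6 : Expr.yOrd E6 ≤ 5 := by
  show max (max (max 0 0) (max 0 0)) (max 0 (Expr.yOrd (Expr.t6 E0))) ≤ 5
  simpa using Expr.yOrd_t6 E0

lemma bridge_dX_iter (hU : IsOpen U) (hφ : AnalyticOnNhd ℝ φ U) (e : Expr) (a : ℕ) :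
    Set.EqOn (pdxR^[a] (ev φ e)) (ev φ (Expr.dX^[a] e)) U := by
  induction a generalizing e with
  | zero => intro z hz; rfl
  | succ a ih =>
      intro z hz
      rw [Function.iterate_succ_apply', pdxR_congr hU (ih e) hz,
        (bridge hU hφ (Expr.dX^[a] e)).2.1 hz,
        show Expr.dX^[a + 1] e = Expr.dX (Expr.dX^[a] e) from Function.iterate_succ_apply' _ _ _]

lemma bridge_dY_iter (hU : IsOpen U) (hφ : AnalyticOnNhd ℝ φ U) (e : Expr) (a : ℕ) :
    Set.EqOn (pdyR^[a] (ev φ e)) (ev φ (Expr.dY^[a] e)) U := by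
  induction a generalizing e with
  | zero => intro z hz; rfl
  | succ a ih =>
      intro z hz
      rw [Function.iterate_succ_apply', pdyR_congr hU (ih e) hz,
        (bridge hU hφ (Expr.dY^[a] e)).2.2 hz,
        show Expr.dY^[a + 1] e = Expr.dY (Expr.dY^[a] e) from Function.iterate_succ_apply' _ _ _]

lemma lapR_congr (hU : IsOpen U) (h : Set.EqOn f g U) : Set.EqOn (lapR f) (lapR g) U := by
  intro z hz
  show pdxR (pdxR f) z + pdyR (pdyR f) z = pdxR (pdxR g) z + pdyR (pdyR g) z
  rw [pdxR_congr hU (pdxR_congr hU h) hz, pdyR_congr hU (pdyR_congr hU h) hz]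

lemma lapR_ev (hU : IsOpen U) (hφ : AnalyticOnNhd ℝ φ U) (e : Expr) :
    Set.EqOn (lapR (ev φ e)) (ev φ (lapE e)) U := by
  intro z hz
  show pdxR (pdxR (ev φ e)) z + pdyR (pdyR (ev φ e)) z = _
  rw [pdxR_congr hU (bridge hU hφ e).2.1 hz, (bridge hU hφ (Expr.dX e)).2.1 hz,
    pdyR_congr hU (bridge hU hφ e).2.2 hz, (bridge hU hφ (Expr.dY e)).2.2 hz]
  rfl

lemma obs_ev (hU : IsOpen U) (hφ : AnalyticOnNhd ℝ φ U) :
    Set.EqOn (obsPDE φ) (ev φ E0) U := by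
  have hP1 : Set.EqOn (lapR φ) (ev φ P1) U := lapR_ev hU hφ (.jet 0 0)
  have hP2 : Set.EqOn (fun u => Real.exp (-2 * φ u) * lapR φ u) (ev φ P2) U := by
    intro u hu
    show Real.exp (-2 * φ u) * lapR φ u = Real.exp ((-2) * D 0 0 φ u) * ev φ P1 u
    rw [← hP1 hu]
    rfl
  have hP4 : Set.EqOn (fun w => Real.exp (-2 * φ w) *
      lapR (fun u => Real.exp (-2 * φ u) * lapR φ u) w) (ev φ P4) U := by
    intro w hw
    show Real.exp (-2 * φ w) * lapR (fun u => Real.exp (-2 * φ u) * lapR φ u) w =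
      Real.exp ((-2) * D 0 0 φ w) * ev φ (lapE P2) w
    rw [lapR_congr hU hP2 hw, lapR_ev hU hφ P2 hw]
    rfl
  have hBB : Set.EqOn (fun w => Real.exp (-4 * φ w) * (lapR φ w) ^ 2)
      (ev φ (.mul (.mul EE EE) (.mul P1 P1))) U := by
    intro w hw
    show Real.exp (-4 * φ w) * (lapR φ w) ^ 2 =
      (Real.exp ((-2) * D 0 0 φ w) * Real.exp ((-2) * D 0 0 φ w)) * (ev φ P1 w * ev φ P1 w)
    rw [← hP1 hw]
    have hred : D 0 0 φ w = φ w := rfl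
    rw [hred, show (-4 : ℝ) * φ w = (-2) * φ w + (-2) * φ w by ring, Real.exp_add]
    ring
  intro z hz
  show obsPDE φ z = ev φ EA z + (-1) * ev φ EB z
  have h1 : lapR (fun w => Real.exp (-2 * φ w) *
      lapR (fun u => Real.exp (-2 * φ u) * lapR φ u) w) z = ev φ EA z := by
    rw [lapR_congr hU hP4 hz]; exact lapR_ev hU hφ P4 hz
  have h2 : lapR (fun w => Real.exp (-4 * φ w) * (lapR φ w) ^ 2) z = ev φ EB z := by
    rw [lapR_congr hU hBB hz]; exact lapR_ev hU hφ (.mul (.mul EE EE) (.mul P1 P1)) hz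
  show lapR _ z - lapR _ z = _
  rw [h1, h2]
  ring

lemma key_E6 (hU : IsOpen U) (hφ : AnalyticOnNhd ℝ φ U) (hpde : ∀ z ∈ U, obsPDE φ z = 0) :
    Set.EqOn (D 0 6 φ) (ev φ E6) U := by
  intro z hz
  have h0 : Expr.eval E0 (fun a b => D a b φ z) = 0 := by
    have h0' : ev φ E0 z = 0 := by rw [← obs_ev hU hφ hz]; exact hpde z hz
    exact h0'
  have hd : Expr.eval E0 (fun a b => D a b φ z) =
      Real.exp (-2 * D 0 0 φ z) * Real.exp (-2 * D 0 0 φ z) * D 0 6 φ z +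
        Expr.eval (Expr.t6 E0) (fun a b => D a b φ z) := decomp _
  have hsub : Expr.eval (Expr.t6 E0) (fun a b => D a b φ z) =
      -(Real.exp (-2 * D 0 0 φ z) * Real.exp (-2 * D 0 0 φ z) * D 0 6 φ z) := by linarith
  have hB : Real.exp (2 * D 0 0 φ z) * Real.exp (-2 * D 0 0 φ z) = 1 := by
    rw [← Real.exp_add]; norm_num
  show D 0 6 φ z = (Real.exp (2 * D 0 0 φ z) * Real.exp (2 * D 0 0 φ z)) *
    ((-1) * Expr.eval (Expr.t6 E0) (fun a b => D a b φ z))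
  rw [hsub]
  have hr : (Real.exp (2 * D 0 0 φ z) * Real.exp (2 * D 0 0 φ z)) *
      ((-1) * -(Real.exp (-2 * D 0 0 φ z) * Real.exp (-2 * D 0 0 φ z) * D 0 6 φ z)) =
      (Real.exp (2 * D 0 0 φ z) * Real.exp (-2 * D 0 0 φ z)) *
        ((Real.exp (2 * D 0 0 φ z)) * Real.exp (-2 * D 0 0 φ z)) * D 0 6 φ z := by ring
  rw [hr, hB]; ring

/-- Directional derivative operator. -/
noncomputable def pdvR (v : ℂ) (f : ℂ → ℝ) : ℂ → ℝ := fun z => fderiv ℝ f z v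

lemma pdvR_congr (hU : IsOpen U) (h : Set.EqOn f g U) (v : ℂ) :
    Set.EqOn (pdvR v f) (pdvR v g) U := fun z hz => by
  have hev : f =ᶠ[nhds z] g := Filter.eventuallyEq_of_mem (hU.mem_nhds hz) h
  simp only [pdvR, hev.fderiv_eq]

lemma dir_decomp (g : ℂ → ℝ) (z v : ℂ) :
    fderiv ℝ g z v = v.re * pdxR g z + v.im * pdyR g z := by
  have hv : v = v.re • (1 : ℂ) + v.im • Complex.I := by
    simp [Complex.real_smul]
  calc fderiv ℝ g z v = fderiv ℝ g z (v.re • (1 : ℂ) + v.im • Complex.I) := by rw [← hv]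
    _ = v.re * pdxR g z + v.im * pdyR g z := by
        rw [map_add, map_smul, map_smul]; rfl

noncomputable def dV (v : ℂ) (e : Expr) : Expr :=
  .add (.mul (.const v.re) (Expr.dX e)) (.mul (.const v.im) (Expr.dY e))

lemma bridge_dV (hU : IsOpen U) (hφ : AnalyticOnNhd ℝ φ U) (v : ℂ) (e : Expr) :
    Set.EqOn (pdvR v (ev φ e)) (ev φ (dV v e)) U := fun z hz => by
  show fderiv ℝ (ev φ e) z v = _
  rw [dir_decomp]
  have h1 := (bridge hU hφ e).2.1 hz
  have h2 := (bridge hU hφ e).2.2 hz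
  show v.re * pdxR (ev φ e) z + v.im * pdyR (ev φ e) z =
    v.re * ev φ (Expr.dX e) z + v.im * ev φ (Expr.dY e) z
  rw [h1, h2]

lemma bridge_dV_iter (hU : IsOpen U) (hφ : AnalyticOnNhd ℝ φ U) (v : ℂ) (e : Expr) (n : ℕ) :
    Set.EqOn ((pdvR v)^[n] (ev φ e)) (ev φ ((dV v)^[n] e)) U := by
  induction n generalizing e with
  | zero => intro z hz; rfl
  | succ n ih =>
      intro z hz
      rw [Function.iterate_succ_apply', pdvR_congr hU (ih e) v hz,
        bridge_dV hU hφ v ((dV v)^[n] e) hz,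
        show (dV v)^[n + 1] e = dV v ((dV v)^[n] e) from Function.iterate_succ_apply' _ _ _]

lemma iter_diag (hU : IsOpen U) (hf : AnalyticOnNhd ℝ f U) (v : ℂ) (n : ℕ) :
    Set.EqOn (fun z => iteratedFDeriv ℝ n f z (fun _ => v)) ((pdvR v)^[n] f) U := by
  induction n with
  | zero => intro z hz; simp [iteratedFDeriv_zero_apply]
  | succ n ih =>
      intro z hz
      have hdiff : DifferentiableAt ℝ (iteratedFDeriv ℝ n f) z :=
        ((hf.iteratedFDeriv n) z hz).differentiableAt
      have step1 : iteratedFDeriv ℝ (n + 1) f z (fun _ => v) =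
          fderiv ℝ (iteratedFDeriv ℝ n f) z v (fun _ : Fin n => v) := by
        rw [iteratedFDeriv_succ_apply_left]
        rfl
      have step2 : fderiv ℝ (iteratedFDeriv ℝ n f) z v (fun _ : Fin n => v) =
          fderiv ℝ (fun w => iteratedFDeriv ℝ n f w (fun _ : Fin n => v)) z v :=
        (fderiv_continuousMultilinear_apply_const_apply hdiff _ _).symm
      show iteratedFDeriv ℝ (n + 1) f z (fun _ => v) = (pdvR v)^[n + 1] f z
      rw [step1, step2]
      have step3 : pdvR v (fun w => iteratedFDeriv ℝ n f w (fun _ : Fin n => v)) z =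
          pdvR v ((pdvR v)^[n] f) z := pdvR_congr hU ih v hz
      show pdvR v (fun w => iteratedFDeriv ℝ n f w (fun _ : Fin n => v)) z = _
      rw [step3, ← Function.iterate_succ_apply' (pdvR v) n f]

end CK

/-- injectivity in Lemma 4.5 of the paper, via Cauchy–Kowalevski: two real
analytic solutions of the sixth-order obstruction-flatness PDE with the same 6-jet Cauchy data
on the line `{y = 0}` agree near the origin. -/
theorem obstruction_flat_cauchy_uniqueness (U : Set ℂ) (hUopen : IsOpen U)
    (hUconn : IsConnected U) (hU0 : (0 : ℂ) ∈ U)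
    (φ₁ φ₂ : ℂ → ℝ) (h₁ : AnalyticOnNhd ℝ φ₁ U) (h₂ : AnalyticOnNhd ℝ φ₂ U)
    (hpde₁ : ∀ z ∈ U, obsPDE φ₁ z = 0) (hpde₂ : ∀ z ∈ U, obsPDE φ₂ z = 0)
    (I : Set ℝ) (hIopen : IsOpen I) (hI0 : (0 : ℝ) ∈ I) (hIint : I.OrdConnected)
    (hIU : ∀ x ∈ I, (x : ℂ) ∈ U)
    (hdata : ∀ j : Fin 6, ∀ x ∈ I,
      (pdyR^[(j : ℕ)] φ₁) (x : ℂ) = (pdyR^[(j : ℕ)] φ₂) (x : ℂ)) :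
    ∃ V : Set ℂ, IsOpen V ∧ (0 : ℂ) ∈ V ∧ ∀ z ∈ V, φ₁ z = φ₂ z := by
  classical
  -- Step 1: all mixed jets of φ₁ and φ₂ agree on the segment I × {0}.
  have hQ : ∀ b a : ℕ, ∀ x ∈ I, CK.D a b φ₁ ↑x = CK.D a b φ₂ ↑x := by
    intro b
    induction b using Nat.strong_induction_on with
    | _ b ih =>
      rcases Nat.lt_or_ge b 6 with hb | hb
      · intro a
        induction a with
        | zero =>
            intro x hx
            exact hdata ⟨b, hb⟩ x hx
        | succ a iha =>
            intro x hx
            have h1 := CK.tangent_deriv hIopen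
              ((CK.analytic_D h₁ a b _ (hIU x hx)).differentiableAt)
              ((CK.analytic_D h₂ a b _ (hIU x hx)).differentiableAt)
              iha hx
            rw [CK.pdxR_D, CK.pdxR_D] at h1
            exact h1
      · obtain ⟨m, rfl⟩ : ∃ m, b = 6 + m := ⟨b - 6, by omega⟩
        intro a x hx
        have hxU : (↑x : ℂ) ∈ U := hIU x hx
        have hid : ∀ ψ : ℂ → ℝ, AnalyticOnNhd ℝ ψ U → (∀ z ∈ U, obsPDE ψ z = 0) →
            CK.D a (6 + m) ψ ↑x = CK.ev ψ (CK.Expr.dX^[a] (CK.Expr.dY^[m] CK.E6)) ↑x := by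
          intro ψ hψ hpde
          have h6 : Set.EqOn (CK.D 0 6 ψ) (CK.ev ψ CK.E6) U := CK.key_E6 hUopen hψ hpde
          have e1 : Set.EqOn (pdyR^[m] (CK.D 0 6 ψ)) (CK.ev ψ (CK.Expr.dY^[m] CK.E6)) U :=
            fun z hz => (CK.pdyR_iter_congr hUopen h6 m hz).trans
              (CK.bridge_dY_iter hUopen hψ CK.E6 m hz)
          have e2 : Set.EqOn (pdxR^[a] (pdyR^[m] (CK.D 0 6 ψ)))
              (CK.ev ψ (CK.Expr.dX^[a] (CK.Expr.dY^[m] CK.E6))) U :=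
            fun z hz => (CK.pdxR_iter_congr hUopen e1 a hz).trans
              (CK.bridge_dX_iter hUopen hψ _ a hz)
          have hDD : CK.D a (6 + m) ψ = pdxR^[a] (pdyR^[m] (CK.D 0 6 ψ)) := by
            show pdxR^[a] (pdyR^[6 + m] ψ) = _
            rw [Nat.add_comm 6 m, Function.iterate_add_apply]
            rfl
          rw [hDD]
          exact e2 hxU
        rw [hid φ₁ h₁ hpde₁, hid φ₂ h₂ hpde₂]
        show CK.Expr.eval _ (fun a' b' => CK.D a' b' φ₁ ↑x) =
          CK.Expr.eval _ (fun a' b' => CK.D a' b' φ₂ ↑x)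
        apply CK.Expr.eval_congr_le _ (N := 5 + m)
        · calc CK.Expr.yOrd (CK.Expr.dX^[a] (CK.Expr.dY^[m] CK.E6))
              = CK.Expr.yOrd (CK.Expr.dY^[m] CK.E6) := CK.Expr.yOrd_dX_iter _ a
            _ ≤ CK.Expr.yOrd CK.E6 + m := CK.Expr.yOrd_dY_iter _ m
            _ ≤ 5 + m := by have := CK.yOrd_E6; omega
        · intro a' b' hb'
          exact ih b' (by omega) a' x hx
  -- Step 2: all diagonal iterated derivatives agree at the origin.
  have hAll : ∀ a b : ℕ, CK.D a b φ₁ 0 = CK.D a b φ₂ 0 := by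
    intro a b
    have := hQ b a 0 hI0
    simpa using this
  have hdiag : ∀ (n : ℕ) (v : ℂ),
      iteratedFDeriv ℝ n φ₁ 0 (fun _ => v) = iteratedFDeriv ℝ n φ₂ 0 (fun _ => v) := by
    intro n v
    have q1 := CK.iter_diag hUopen h₁ v n hU0
    have q2 := CK.iter_diag hUopen h₂ v n hU0
    have r1 : (CK.pdvR v)^[n] φ₁ 0 = CK.ev φ₁ ((CK.dV v)^[n] (.jet 0 0)) 0 :=
      CK.bridge_dV_iter hUopen h₁ v (.jet 0 0) n hU0
    have r2 : (CK.pdvR v)^[n] φ₂ 0 = CK.ev φ₂ ((CK.dV v)^[n] (.jet 0 0)) 0 :=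
      CK.bridge_dV_iter hUopen h₂ v (.jet 0 0) n hU0
    have c : CK.ev φ₁ ((CK.dV v)^[n] (.jet 0 0)) 0 = CK.ev φ₂ ((CK.dV v)^[n] (.jet 0 0)) 0 :=
      CK.Expr.eval_congr _ (fun a b => hAll a b)
    calc iteratedFDeriv ℝ n φ₁ 0 (fun _ => v) = (CK.pdvR v)^[n] φ₁ 0 := q1
      _ = CK.ev φ₁ ((CK.dV v)^[n] (.jet 0 0)) 0 := r1
      _ = CK.ev φ₂ ((CK.dV v)^[n] (.jet 0 0)) 0 := c
      _ = (CK.pdvR v)^[n] φ₂ 0 := r2.symm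
      _ = iteratedFDeriv ℝ n φ₂ 0 (fun _ => v) := q2.symm
  -- Step 3: power series expansion near 0.
  obtain ⟨p₁, hp₁⟩ := h₁ 0 hU0
  obtain ⟨r₁, hr₁⟩ := hp₁
  obtain ⟨p₂, hp₂⟩ := h₂ 0 hU0
  obtain ⟨r₂, hr₂⟩ := hp₂
  refine ⟨EMetric.ball 0 (min r₁ r₂), EMetric.isOpen_ball,
    EMetric.mem_ball_self (lt_min hr₁.r_pos hr₂.r_pos), ?_⟩
  intro z hz
  have hz1 : z ∈ EMetric.ball (0 : ℂ) r₁ := EMetric.ball_subset_ball (min_le_left _ _) hz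
  have hz2 : z ∈ EMetric.ball (0 : ℂ) r₂ := EMetric.ball_subset_ball (min_le_right _ _) hz
  have s1 := hr₁.hasSum_iteratedFDeriv hz1
  have s2 := hr₂.hasSum_iteratedFDeriv hz2
  simp only [hdiag] at s1
  have := s1.unique s2
  simpa using this
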